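/- Let Z be a finite set of clauses of rank 0 (i.e., there is no literal l such that l and l* occur in distinct clauses of Z) with the empty clause ⊥ not in Z. Then the formula ⋀Z → ⊥ is not valid; equivalently, there exists a valuation making every clause in Z true. -/
import Mathlib


/-- Propositional formulas over variables indexed by naturals. -/
inductive PropForm where
  | var : Nat → PropForm
  | fls : PropForm
  | tru : PropForm
  | neg : PropForm → PropForm
  | conj : PropForm → PropForm → PropForm
  | disj : PropForm → PropForm → PropForm
deriving DecidableEq

/-- Classical Boolean evaluation of a formula under a valuation. -/
def PropForm.eval (v : Nat → Bool) : PropForm → Bool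
  | .var n => v n
  | .fls => false
  | .tru => true
  | .neg A => !(A.eval v)
  | .conj A B => A.eval v && B.eval v
  | .disj A B => A.eval v || B.eval v

/-- The propositional variables occurring in a formula. -/
def PropForm.vars : PropForm → Finset Nat
  | .var n => {n}
  | .fls => ∅
  | .tru => ∅
  | .neg A => A.vars
  | .conj A B => A.vars ∪ B.vars
  | .disj A B => A.vars ∪ B.vars

/-- A formula is valid iff true under every valuation. -/
def PropForm.Valid (A : PropForm) : Prop := ∀ v : Nat → Bool, A.eval v = true

/-- Literals: a variable or its negation. -/
inductive Lit where
  | pos : Nat → Lit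
  | neg : Nat → Lit
deriving DecidableEq

/-- The complement of a literal. -/
def Lit.compl : Lit → Lit
  | .pos n => .neg n
  | .neg n => .pos n

/-- The variable of a literal. -/
def Lit.var : Lit → Nat
  | .pos n => n
  | .neg n => n

/-- Evaluation of a literal. -/
def Lit.eval (v : Nat → Bool) : Lit → Bool
  | .pos n => v n
  | .neg n => !(v n)

/-- A literal as a formula. -/
def Lit.toForm : Lit → PropForm
  | .pos n => .var n
  | .neg n => .neg (.var n)

/-- A clause (finite set of literals read disjunctively) is satisfied by `v`. -/
def clauseSat (v : Nat → Bool) (C : Finset Lit) : Prop := ∃ l ∈ C, l.eval v = true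

/-- A conjunction of literals (finite set read conjunctively) is satisfied by `v`. -/
def cubeSat (v : Nat → Bool) (C : Finset Lit) : Prop := ∀ l ∈ C, l.eval v = true

theorem stmt1 (Z : Finset (Finset Lit))
    (h0 : ¬ ∃ l : Lit, ∃ C₁ ∈ Z, ∃ C₂ ∈ Z, C₁ ≠ C₂ ∧ l ∈ C₁ ∧ l.compl ∈ C₂)
    (hne : (∅ : Finset Lit) ∉ Z) :
    ¬ (∀ v : Nat → Bool, (∀ C ∈ Z, clauseSat v C) → False) ∧
      ∃ v : Nat → Bool, ∀ C ∈ Z, clauseSat v C := by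
  classical
  set v : Nat → Bool := fun n => decide (∃ C ∈ Z, Lit.pos n ∈ C) with hv
  have hsat : ∀ C ∈ Z, clauseSat v C := by
    intro C hC
    by_cases hp : ∃ n, Lit.pos n ∈ C
    · obtain ⟨n, hn⟩ := hp
      refine ⟨Lit.pos n, hn, ?_⟩
      simp [Lit.eval, hv]
      exact ⟨C, hC, hn⟩
    · -- C nonempty, all literals negative
      have hCne : C ≠ ∅ := fun h => hne (h ▸ hC)
      obtain ⟨l, hl⟩ := Finset.nonempty_iff_ne_empty.mpr hCne
      cases l with
      | pos n => exact absurd ⟨n, hl⟩ hp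
      | neg n =>
        refine ⟨Lit.neg n, hl, ?_⟩
        simp only [Lit.eval, hv, Bool.not_eq_true', decide_eq_false_iff_not]
        rintro ⟨C₂, hC₂, hpn⟩
        have hne2 : C₂ ≠ C := by
          intro h; exact hp ⟨n, h ▸ hpn⟩
        exact h0 ⟨Lit.pos n, C₂, hC₂, C, hC, hne2, hpn, hl⟩
  exact ⟨fun h => h v hsat, v, hsat⟩
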